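/- Let E be a finite-dimensional real inner product space, and let φ : E → ℝ be differentiable, strictly convex, and supercoercive (φ(x)/‖x‖ → ∞ as ‖x‖ → ∞). Let V ⊆ E be a linear subspace and x₀, yᴾ ∈ E. Let x_EQ be the unique point of x₀ + V with ∇φ(x_EQ) − yᴾ ∈ V^⊥, and let x_P ∈ E be any point with ∇φ(x_P) − yᴾ ∈ V^⊥. Then x_EQ is the unique minimizer of x ↦ D[x‖x_P] over the affine subspace x₀ + V: for every x ∈ x₀ + V with x ≠ x_EQ, D[x‖x_P] > D[x_EQ‖x_P]. -/

import Mathlib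

open scoped RealInnerProductSpace

lemma gradient_strict_ineq
    {E : Type*} [NormedAddCommGroup E] [InnerProductSpace ℝ E] [CompleteSpace E]
    (φ : E → ℝ) (hdiff : Differentiable ℝ φ)
    (hconv : StrictConvexOn ℝ Set.univ φ) (x y : E) (hxy : x ≠ y) :
    φ y + ⟪gradient φ y, x - y⟫ < φ x := by
  set g : ℝ → ℝ := fun t => φ (y + t • (x - y)) with hg
  have hgconv : StrictConvexOn ℝ Set.univ g := by
    refine ⟨convex_univ, fun s _ t _ hst a b ha hb hab => ?_⟩
    have hne : y + s • (x - y) ≠ y + t • (x - y) := by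
      intro h
      apply hst
      have := add_left_cancel h
      have hx0 : x - y ≠ 0 := sub_ne_zero.mpr hxy
      exact smul_left_injective ℝ hx0 this
    have := hconv.2 (Set.mem_univ (y + s • (x - y))) (Set.mem_univ (y + t • (x - y)))
      hne ha hb hab
    obtain rfl : b = 1 - a := by linarith
    convert this using 2
    simp [hg]
    module
  have hderiv : HasDerivAt g ⟪gradient φ y, x - y⟫ 0 := by
    have h1 : HasDerivAt (fun t : ℝ => y + t • (x - y)) (x - y) 0 := by
      simpa using ((hasDerivAt_id (0:ℝ)).smul_const (x - y)).const_add y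
    have h2 : HasFDerivAt φ (fderiv ℝ φ (y + (0:ℝ) • (x - y))) (y + (0:ℝ) • (x - y)) :=
      (hdiff _).hasFDerivAt
    have := h2.comp_hasDerivAt 0 h1
    simp only [zero_smul, add_zero] at this
    have hgr : fderiv ℝ φ y (x - y) = ⟪gradient φ y, x - y⟫ := by
      have := ((hdiff y).hasGradientAt (f := φ)).hasFDerivAt
      rw [this.fderiv]
      simp
    rw [hgr] at this; exact this
  have := hgconv.lt_slope_of_hasDerivAt (Set.mem_univ (0:ℝ)) (Set.mem_univ (1:ℝ))
    zero_lt_one hderiv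
  rw [slope_def_field] at this
  have hg0 : g 0 = φ y := by simp [hg]
  have hg1 : g 1 = φ x := by simp [hg]
  simp only [hg0, hg1] at this
  field_simp at this
  linarith

/-- **The equilibrium state minimizes the divergence over the stoichiometric manifold.**
Let `φ` be differentiable, strictly convex and supercoercive on a finite-dimensional real
inner product space, `V` a linear subspace, `xEQ` the point of `x₀ + V` with
`∇φ xEQ - yP ∈ Vᗮ`, and `xP` any point with `∇φ xP - yP ∈ Vᗮ`.  Then `xEQ` is the
unique minimizer of `x ↦ D[x‖xP]` over `x₀ + V`. -/
theorem equilibrium_minimizes_divergence_on_stoichiometric_manifold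
    {E : Type*} [NormedAddCommGroup E] [InnerProductSpace ℝ E] [FiniteDimensional ℝ E]
    (φ : E → ℝ) (hdiff : Differentiable ℝ φ)
    (hconv : StrictConvexOn ℝ Set.univ φ)
    (hcoer : Filter.Tendsto (fun x => φ x / ‖x‖) (Filter.cocompact E) Filter.atTop)
    (V : Submodule ℝ E) (x₀ yP xEQ xP : E)
    (hEQmem : xEQ - x₀ ∈ V) (hEQ : gradient φ xEQ - yP ∈ Vᗮ)
    (hP : gradient φ xP - yP ∈ Vᗮ) :
    ∀ x : E, x - x₀ ∈ V → x ≠ xEQ →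
      φ xEQ - φ xP - ⟪gradient φ xP, xEQ - xP⟫ <
        φ x - φ xP - ⟪gradient φ xP, x - xP⟫ := by
  intro x hxmem hxne
  have hv : x - xEQ ∈ V := by
    have := V.sub_mem hxmem hEQmem
    simpa using this
  have hperp : gradient φ xP - gradient φ xEQ ∈ Vᗮ := by
    have := Vᗮ.sub_mem hP hEQ
    simpa using this
  have hinner : ⟪gradient φ xP - gradient φ xEQ, x - xEQ⟫ = 0 := by
    rw [real_inner_comm]; exact hperp (x - xEQ) hv
  have key := gradient_strict_ineq φ hdiff hconv x xEQ hxne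
  have hsplit : ⟪gradient φ xP, x - xP⟫ - ⟪gradient φ xP, xEQ - xP⟫
      = ⟪gradient φ xP, x - xEQ⟫ := by
    rw [← inner_sub_right]
    congr 1
    abel
  have hsub : ⟪gradient φ xP, x - xEQ⟫ = ⟪gradient φ xEQ, x - xEQ⟫ := by
    have := inner_sub_left (𝕜 := ℝ) (gradient φ xP) (gradient φ xEQ) (x - xEQ)
    rw [hinner] at this
    linarith
  linarith [key, hsplit, hsub]
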